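/- Property 3 of exact-repair MSR codes (MDS property of the repair vectors): Assume d < 2k-1 (so k > α) and β = 1. Let γ^{(m,1)},...,γ^{(m,k)} ∈ colspace(G^{(m)}) be the repair vectors passed by parity node m, where G^{(m)} is B×α with all k row-blocks invertible; assume for each failed node ℓ the desired blocks {γ^{(m,ℓ)}_ℓ}_m over the α parity nodes are linearly independent, and for each ℓ and each i ≠ ℓ the interference blocks {γ^{(m,ℓ)}_i}_m span dimension at most 1. Then for each parity node m, every subset of α vectors among {γ^{(m,1)},...,γ^{(m,k)}} is linearly independent. -/

import Mathlib

private lemma mulVec_finset_sum {F : Type*} [Field F] {n : ℕ}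
    (M : Matrix (Fin n) (Fin n) F) {ι : Type*} (t : Finset ι) (f : ι → Fin n → F) :
    M.mulVec (∑ j ∈ t, f j) = ∑ j ∈ t, M.mulVec (f j) := by
  exact map_sum M.mulVecLin f t

/-- Property 3: for `d < 2k - 1` (so `k > α`), every `α`-subset of the `k` repair
vectors passed by a parity node is linearly independent. -/
theorem repair_vectors_mds
    {F : Type*} [Field F] [Fintype F] {k α : ℕ} (hαk : α < k)
    (G : Fin α → Matrix (Fin k × Fin α) (Fin α) F)
    (hblk : ∀ (m : Fin α) (i : Fin k),
      IsUnit (Matrix.of (fun a j => G m (i, a) j) : Matrix (Fin α) (Fin α) F))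
    (γ : Fin α → Fin k → (Fin k × Fin α → F))
    (hcol : ∀ m ℓ, ∃ θ : Fin α → F, γ m ℓ = (G m).mulVec θ)
    (hdesired : ∀ ℓ : Fin k,
      LinearIndependent F (fun m : Fin α => fun a => γ m ℓ (ℓ, a)))
    (halign : ∀ ℓ i : Fin k, i ≠ ℓ → ∃ u : Fin α → F, ∀ m : Fin α, ∃ c : F,
      (fun a => γ m ℓ (i, a)) = c • u) :
    ∀ m : Fin α, ∀ s : Fin α → Fin k, Function.Injective s →
      LinearIndependent F (fun j : Fin α => γ m (s j)) := by
  classical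
  choose θ hθ using hcol
  choose u hu using halign
  choose c hc using hu
  -- notation for the blocks of G
  set Mb : Fin α → Fin k → Matrix (Fin α) (Fin α) F :=
    fun m i => Matrix.of (fun a j => G m (i, a) j) with hMb
  -- the i-th block of γ m ℓ is Mb m i applied to θ m ℓ
  have hblock : ∀ (m : Fin α) (ℓ i : Fin k),
      (fun a => γ m ℓ (i, a)) = (Mb m i).mulVec (θ m ℓ) := by
    intro m ℓ i
    funext a
    rw [hθ m ℓ]
    rfl
  have hinj : ∀ (m : Fin α) (i : Fin k), Function.Injective ((Mb m i).mulVec) :=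
    fun m i => Matrix.mulVec_injective_iff_isUnit.mpr (hblk m i)
  have hγblkne : ∀ (m : Fin α) (ℓ : Fin k), (fun a => γ m ℓ (ℓ, a)) ≠ 0 := by
    intro m ℓ
    have h := (hdesired ℓ).ne_zero m
    simpa using h
  have hθne : ∀ (m : Fin α) (ℓ : Fin k), θ m ℓ ≠ 0 := by
    intro m ℓ h
    apply hγblkne m ℓ
    rw [hblock m ℓ ℓ, h, Matrix.mulVec_zero]
  have hcne : ∀ (ℓ i : Fin k) (h : i ≠ ℓ) (m : Fin α), c ℓ i h m ≠ 0 := by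
    intro ℓ i h m hc0
    apply hθne m ℓ
    apply hinj m i
    rw [Matrix.mulVec_zero, ← hblock m ℓ i, hc ℓ i h m, hc0, zero_smul]
  intro m s hs
  -- pick a block index outside the range of s
  have hnsurj : ¬ Function.Surjective s := by
    intro h
    exact absurd (Fintype.card_le_of_surjective s h) (by simpa using hαk.not_ge)
  obtain ⟨i, hi⟩ : ∃ i : Fin k, ∀ j, s j ≠ i := by
    by_contra hcon
    push_neg at hcon
    exact hnsurj fun x => hcon x
  have hne : ∀ j : Fin α, i ≠ s j := fun j => (hi j).symm
  -- reduce to linear independence of the i-th blocks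
  let L : (Fin k × Fin α → F) →ₗ[F] (Fin α → F) :=
    { toFun := fun f a => f (i, a)
      map_add' := fun f g => rfl
      map_smul' := fun r f => rfl }
  apply LinearIndependent.of_comp L
  have hLγ : (⇑L ∘ fun j : Fin α => γ m (s j))
      = fun j : Fin α => c (s j) i (hne j) m • u (s j) i (hne j) := by
    funext j
    exact hc (s j) i (hne j) m
  rw [hLγ]
  -- linear independence of the interference directions at block i
  have hU : LinearIndependent F (fun j : Fin α => u (s j) i (hne j)) := by
    by_contra hnot
    rw [Fintype.not_linearIndependent_iff] at hnot
    obtain ⟨g, hg, j₀, hj₀⟩ := hnot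
    -- express u (s j₀) i in terms of the others, with coefficient 0 at j₀
    set e : Fin α → F := fun j => if j = j₀ then 0 else -(g j₀)⁻¹ * g j with he
    have hrep : u (s j₀) i (hne j₀) = ∑ j, e j • u (s j) i (hne j) := by
      have hsplit := hg
      rw [← Finset.sum_erase_add _ _ (Finset.mem_univ j₀)] at hsplit
      have hsum : (∑ j, e j • u (s j) i (hne j))
          = ∑ j ∈ Finset.univ.erase j₀, e j • u (s j) i (hne j) := by
        rw [← Finset.sum_erase_add _ _ (Finset.mem_univ j₀)]
        simp [he]
      have hout : (∑ j ∈ Finset.univ.erase j₀, e j • u (s j) i (hne j))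
          = (-(g j₀)⁻¹) • ∑ j ∈ Finset.univ.erase j₀, g j • u (s j) i (hne j) := by
        rw [Finset.smul_sum]
        refine Finset.sum_congr rfl ?_
        intro j hj
        rw [Finset.mem_erase] at hj
        simp [he, hj.1, smul_smul]
      have h2 : (∑ j ∈ Finset.univ.erase j₀, g j • u (s j) i (hne j))
          = -(g j₀ • u (s j₀) i (hne j₀)) := eq_neg_of_add_eq_zero_left hsplit
      rw [hsum, hout, h2, smul_neg, neg_smul, neg_neg, smul_smul,
        inv_mul_cancel₀ hj₀, one_smul]
    -- coefficients for expressing θ m' (s j₀) in terms of the other θ's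
    set d : Fin α → Fin α → F :=
      fun m' j => c (s j₀) i (hne j₀) m' * e j * (c (s j) i (hne j) m')⁻¹ with hd
    have hθrep : ∀ m' : Fin α, θ m' (s j₀) = ∑ j, d m' j • θ m' (s j) := by
      intro m'
      apply hinj m' i
      rw [mulVec_finset_sum, ← hblock m' (s j₀) i, hc (s j₀) i (hne j₀) m', hrep,
        Finset.smul_sum]
      refine Finset.sum_congr rfl ?_
      intro j _
      rw [Matrix.mulVec_smul, ← hblock m' (s j) i, hc (s j) i (hne j) m']
      simp only [hd, smul_smul]
      rw [mul_assoc, inv_mul_cancel₀ (hcne (s j) i (hne j) m'), mul_one]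
    -- every desired block for node s j₀ lies in a small subspace
    have hne2 : ∀ j : Fin α, j ≠ j₀ → s j₀ ≠ s j := fun j hj hc' => hj (hs hc'.symm)
    set W : Submodule F (Fin α → F) := Submodule.span F
      (Set.range (fun j : {j : Fin α // j ≠ j₀} => u (s j.1) (s j₀) (hne2 j.1 j.2)))
      with hW
    have hmemW : ∀ m' : Fin α, (fun a => γ m' (s j₀) (s j₀, a)) ∈ W := by
      intro m'
      rw [hblock m' (s j₀) (s j₀), hθrep m', mulVec_finset_sum]
      apply Submodule.sum_mem
      intro j _
      rw [Matrix.mulVec_smul]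
      by_cases hj : j = j₀
      · have hz : d m' j = 0 := by simp [hd, hj, he]
        rw [hz, zero_smul]
        exact W.zero_mem
      · apply Submodule.smul_mem
        rw [← hblock m' (s j) (s j₀), hc (s j) (s j₀) (hne2 j hj) m']
        exact Submodule.smul_mem _ _ (Submodule.subset_span ⟨⟨j, hj⟩, rfl⟩)
    have hLI : LinearIndependent F
        (fun m' : Fin α => (⟨fun a => γ m' (s j₀) (s j₀, a), hmemW m'⟩ : W)) :=
      LinearIndependent.of_comp W.subtype (hdesired (s j₀))
    have hcard : Fintype.card (Fin α) ≤ Module.finrank F W :=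
      hLI.fintype_card_le_finrank
    have hrank : Module.finrank F W ≤ Fintype.card {j : Fin α // j ≠ j₀} :=
      finrank_range_le_card _
    have hlt : Fintype.card {j : Fin α // j ≠ j₀} < Fintype.card (Fin α) :=
      Fintype.card_subtype_lt (x := j₀) (by simp)
    simp only [Fintype.card_fin] at hcard hlt
    omega
  -- rescale: each block is a nonzero multiple of the corresponding u
  have h2 := hU.units_smul (fun j => Units.mk0 _ (hcne (s j) i (hne j) m))
  have heq : ((fun j => Units.mk0 _ (hcne (s j) i (hne j) m))
      • fun j : Fin α => u (s j) i (hne j))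
      = fun j : Fin α => c (s j) i (hne j) m • u (s j) i (hne j) := by
    funext j
    simp [Units.smul_def]
  rwa [heq] at h2
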